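/- For every natural number n > 10, √5·(log_Φ(√5·(F_{n+2} − n)) + F_{n+2} − n) − 5 + 3/(F_{n+2} − n) < Φ^{n+2}, where Φ = (1+√5)/2. -/

import Mathlib

set_option maxHeartbeats 1000000

open Real goldenRatio

lemma fib_big : ∀ n, 11 ≤ n → n + 222 ≤ Nat.fib (n + 2) := by
  intro n hn
  induction n with
  | zero => omega
  | succ k ih =>
    rcases Nat.lt_or_ge k 11 with h | h
    · interval_cases k <;> simp_all <;> decide
    · have h1 := ih h
      have h2 : 1 ≤ Nat.fib (k + 2) := Nat.fib_pos.mpr (by omega)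
      have h4 : Nat.fib (k + 3) = Nat.fib (k + 1) + Nat.fib (k + 2) := Nat.fib_add_two
      have h3 : 1 ≤ Nat.fib (k + 1) := Nat.fib_pos.mpr (by omega)
      show k + 1 + 222 ≤ Nat.fib (k + 3)
      omega

theorem stmt15 (n : ℕ) (hn : 10 < n) :
    let Φ : ℝ := (1 + Real.sqrt 5) / 2
    Real.sqrt 5 * (Real.logb Φ (Real.sqrt 5 * ((Nat.fib (n + 2) : ℝ) - n)) + (Nat.fib (n + 2) : ℝ) - n)
        - 5 + 3 / ((Nat.fib (n + 2) : ℝ) - n) < Φ ^ (n + 2) := by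
  intro Φ
  have hΦ : Φ = goldenRatio := rfl
  have hs5 : Real.sqrt 5 ^ 2 = 5 := Real.sq_sqrt (by norm_num)
  have hs5nn : (0:ℝ) ≤ Real.sqrt 5 := Real.sqrt_nonneg 5
  have hs5lb : (2.236:ℝ) < Real.sqrt 5 := by nlinarith
  have hs5ub : Real.sqrt 5 < 2.2361 := by nlinarith
  -- m bounds
  have hfibn : n + 222 ≤ Nat.fib (n + 2) := fib_big n (by omega)
  have hfibR : (222:ℝ) ≤ (Nat.fib (n + 2) : ℝ) - n := by
    have : ((n:ℝ) + 222) ≤ (Nat.fib (n + 2) : ℝ) := by exact_mod_cast hfibn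
    linarith
  set m : ℝ := (Nat.fib (n + 2) : ℝ) - n with hm
  have hmpos : (0:ℝ) < m := by linarith
  -- Binet
  have hbinet : (Nat.fib (n + 2) : ℝ) = (φ ^ (n+2) - ψ ^ (n+2)) / Real.sqrt 5 :=
    Real.coe_fib_eq (n + 2)
  have hs5pos : (0:ℝ) < Real.sqrt 5 := by linarith
  have hbinet' : Real.sqrt 5 * (Nat.fib (n + 2) : ℝ) = φ ^ (n+2) - ψ ^ (n+2) := by
    rw [hbinet, mul_comm, div_mul_cancel₀ _ (ne_of_gt hs5pos)]
  -- bound on ψ^(n+2)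
  have hψabs : |ψ| ≤ 1 := by
    rw [abs_le]; constructor <;> simp only [goldenConj] <;> nlinarith
  have hψpow : |ψ ^ (n+2)| ≤ |ψ| ^ 2 := by
    rw [abs_pow]
    exact pow_le_pow_of_le_one (abs_nonneg _) hψabs (by omega)
  have hψsq : |ψ| ^ 2 = (3 - Real.sqrt 5) / 2 := by
    rw [sq_abs]; simp only [goldenConj]; nlinarith
  have hψlb : -((3 - Real.sqrt 5) / 2) ≤ ψ ^ (n+2) := by
    have := (abs_le.mp (hψsq ▸ hψpow)).1; linarith
  have hψub : ψ ^ (n+2) ≤ (3 - Real.sqrt 5) / 2 := by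
    have := (abs_le.mp (hψsq ▸ hψpow)).2; linarith
  -- key: √5 * m < Φ^(n+2)
  have hn11 : (11:ℝ) ≤ n := by exact_mod_cast hn
  have hkey : Real.sqrt 5 * m < Φ ^ (n+2) := by
    rw [hΦ, hm, mul_sub, hbinet']
    nlinarith
  have hΦ1 : (1:ℝ) < Φ := by rw [hΦ]; exact Real.one_lt_goldenRatio
  -- log bound
  have hsm1 : (1:ℝ) < Real.sqrt 5 * m := by nlinarith
  have hlog : Real.logb Φ (Real.sqrt 5 * m) < n + 2 := by
    have h1 : Real.logb Φ (Real.sqrt 5 * m) < Real.logb Φ (Φ ^ (n+2)) :=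
      Real.logb_lt_logb hΦ1 (by linarith) hkey
    rw [Real.logb_pow, Real.logb_self_eq_one (by linarith)] at h1
    push_cast at h1
    linarith
  -- 3/m bound
  have hdiv : 3 / m ≤ 3 / 222 := by
    apply div_le_div_of_nonneg_left (by norm_num) (by norm_num) hfibR
  -- assemble
  have hexp : Φ ^ (n+2) = Real.sqrt 5 * (Nat.fib (n+2) : ℝ) + ψ ^ (n+2) := by
    rw [hΦ, hbinet']; ring
  have hcast : ((n:ℝ)+2) = ((n+2 : ℕ) : ℝ) := by push_cast; ring
  calc Real.sqrt 5 * (Real.logb Φ (Real.sqrt 5 * m) + (Nat.fib (n + 2) : ℝ) - n) - 5 + 3 / m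
      < Real.sqrt 5 * ((n + 2) + (Nat.fib (n + 2) : ℝ) - n) - 5 + 3 / 222 := by nlinarith
    _ < Φ ^ (n+2) := by rw [hexp]; nlinarith
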